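/- The closure of the graph G of Kuratowski's function f in C × [−1,1] is equal to G ∪ ⋃_{x ∈ D} ({x} × I_x), where I_x = [f(x) − 2^{−k_x}, f(x) + 2^{−k_x}]. -/

import Mathlib

open Set Topology

/-- The Cantor space `2^ℕ`, with coordinates indexed by the positive integers. -/
abbrev Cant : Type := ℕ+ → Bool

/-- The support of a point of the Cantor space, as a set of (positive) natural numbers. -/
def ksupp (x : Cant) : Set ℕ := {i | ∃ h : 0 < i, x ⟨i, h⟩ = true}

open scoped Classical in
/-- Kuratowski's function `f(x) = Σ_j (−1)^{c_x(j)} 2^{−j}`, where `c_x` enumerates the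
support of `x` in increasing order; here the summation index `j : ℕ` is the 0-based
version of the paper's 1-based position index, so the weight is `2^{−(j+1)}`. -/
noncomputable def kf (x : Cant) : ℝ :=
  ∑' j : ℕ, if (ksupp x).Infinite ∨ j < (ksupp x).ncard then
    (-1 : ℝ) ^ (Nat.nth (· ∈ ksupp x) j) * (2 : ℝ) ^ (-(j + 1 : ℤ)) else 0

open scoped Classical in
noncomputable def kterm (x : Cant) (j : ℕ) : ℝ :=
  if (ksupp x).Infinite ∨ j < (ksupp x).ncard then
    (-1 : ℝ) ^ (Nat.nth (· ∈ ksupp x) j) * (2 : ℝ) ^ (-(j + 1 : ℤ)) else 0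

lemma kf_eq (x : Cant) : kf x = ∑' j, kterm x j := rfl

lemma two_zpow_neg (m : ℕ) : (2:ℝ) ^ (-(m:ℤ)) = (2⁻¹:ℝ) ^ m := by
  rw [zpow_neg, zpow_natCast, inv_pow]

lemma abs_kterm_le (x : Cant) (j : ℕ) : |kterm x j| ≤ (2⁻¹:ℝ) ^ (j+1) := by
  unfold kterm
  split
  · rw [abs_mul, abs_pow, abs_neg, abs_one, one_pow, one_mul]
    rw [show (-(j+1:ℤ)) = (-((j+1:ℕ):ℤ)) by push_cast; ring, two_zpow_neg, abs_of_pos]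
    positivity
  · simp

lemma summable_kterm (x : Cant) : Summable (kterm x) := by
  apply Summable.of_abs
  apply Summable.of_nonneg_of_le (fun j => abs_nonneg _) (abs_kterm_le x)
  exact (summable_geometric_of_lt_one (by norm_num) (by norm_num)).comp_injective
    (add_left_injective 1)

lemma summable_abs_kterm (x : Cant) : Summable fun j => |kterm x j| := by
  apply Summable.of_nonneg_of_le (fun j => abs_nonneg _) (abs_kterm_le x)
  exact (summable_geometric_of_lt_one (by norm_num) (by norm_num)).comp_injective
    (add_left_injective 1)

lemma kf_split (x : Cant) (m : ℕ) :
    kf x = (∑ j ∈ Finset.range m, kterm x j) + ∑' j, kterm x (j + m) := by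
  rw [kf_eq, ← Summable.sum_add_tsum_nat_add m (summable_kterm x)]

lemma tsum_half_pow (m : ℕ) : ∑' j : ℕ, (2⁻¹:ℝ) ^ (j + m + 1) = (2⁻¹:ℝ) ^ m := by
  have : ∀ j : ℕ, (2⁻¹:ℝ) ^ (j + m + 1) = (2⁻¹:ℝ) ^ j * (2⁻¹:ℝ) ^ (m+1) := by
    intro j; rw [← pow_add]; ring_nf
  rw [tsum_congr this, tsum_mul_right,
    tsum_geometric_of_lt_one (by norm_num) (by norm_num)]
  rw [pow_succ]
  norm_num
  ring

lemma abs_tail_le (x : Cant) (m : ℕ) : |∑' j, kterm x (j + m)| ≤ (2⁻¹:ℝ) ^ m := by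
  have hs : Summable fun j => |kterm x (j + m)| :=
    (summable_abs_kterm x).comp_injective (add_left_injective m)
  have h1 : |∑' j, kterm x (j + m)| ≤ ∑' j, |kterm x (j + m)| := by
    have := norm_tsum_le_tsum_norm (f := fun j => kterm x (j + m))
      (by simpa only [Real.norm_eq_abs] using hs)
    simpa only [Real.norm_eq_abs] using this
  refine h1.trans ?_
  calc ∑' j, |kterm x (j + m)| ≤ ∑' j : ℕ, (2⁻¹:ℝ) ^ (j + m + 1) :=
        Summable.tsum_le_tsum (fun j => abs_kterm_le x (j+m)) hs
          ((summable_geometric_of_lt_one (by norm_num) (by norm_num)).comp_injective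
            (fun a b h => by omega))
    _ = (2⁻¹:ℝ) ^ m := tsum_half_pow m

lemma setOf_mem_ksupp (x : Cant) : setOf (· ∈ ksupp x) = ksupp x := rfl

open scoped Classical in
lemma count_congr' {p q : ℕ → Prop} {N : ℕ}
    (h : ∀ i < N, (p i ↔ q i)) : ∀ {n : ℕ}, n ≤ N → Nat.count p n = Nat.count q n := by
  intro n hn
  induction n with
  | zero => simp
  | succ n ih =>
    rw [Nat.count_succ, Nat.count_succ, ih (by omega)]
    have hpq := h n (by omega)
    by_cases hp : p n
    · rw [if_pos hp, if_pos (hpq.1 hp)]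
    · rw [if_neg hp, if_neg (fun hq => hp (hpq.2 hq))]

open scoped Classical in
lemma kterm_congr {x y : Cant} {N : ℕ}
    (h : ∀ i < N, (i ∈ ksupp x ↔ i ∈ ksupp y)) {j : ℕ}
    (hj : j < Nat.count (· ∈ ksupp x) N) : kterm x j = kterm y j := by
  set p : ℕ → Prop := (· ∈ ksupp x) with hp
  set q : ℕ → Prop := (· ∈ ksupp y) with hq
  have hcardp : ∀ hf : (setOf p).Finite, j < hf.toFinset.card := fun hf =>
    lt_of_lt_of_le hj (Nat.count_le_card hf N)
  have hpi : p (Nat.nth p j) := Nat.nth_mem j hcardp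
  have hiN : Nat.nth p j < N := Nat.nth_lt_of_lt_count hj
  have hcnt : Nat.count p (Nat.nth p j) = j := Nat.count_nth hcardp
  have hqi : q (Nat.nth p j) := (h _ hiN).1 hpi
  have hcq : Nat.count q (Nat.nth p j) = j := by
    rw [← count_congr' h (le_of_lt hiN), hcnt]
  have hnth : Nat.nth q j = Nat.nth p j := by
    conv_lhs => rw [← hcq]
    exact Nat.nth_count hqi
  have hcN : Nat.count q N = Nat.count p N := (count_congr' h le_rfl).symm
  have hcardq : ∀ hf : (setOf q).Finite, j < hf.toFinset.card := fun hf =>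
    lt_of_lt_of_le (hcN ▸ hj) (Nat.count_le_card hf N)
  have hx : (ksupp x).Infinite ∨ j < (ksupp x).ncard := by
    by_cases hfin : (ksupp x).Finite
    · right
      rw [Set.ncard_eq_toFinset_card (ksupp x) hfin]
      exact hcardp hfin
    · exact Or.inl hfin
  have hy : (ksupp y).Infinite ∨ j < (ksupp y).ncard := by
    by_cases hfin : (ksupp y).Finite
    · right
      rw [Set.ncard_eq_toFinset_card (ksupp y) hfin]
      exact hcardq hfin
    · exact Or.inl hfin
  unfold kterm
  rw [if_pos hx, if_pos hy]
  rw [show Nat.nth (· ∈ ksupp y) j = Nat.nth (· ∈ ksupp x) j from hnth]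

lemma kterm_eq_zero (x : Cant) (hx : (ksupp x).Finite) {j : ℕ}
    (hj : (ksupp x).ncard ≤ j) : kterm x j = 0 := by
  unfold kterm
  rw [if_neg]
  push_neg
  exact ⟨hx, hj⟩

open scoped Classical in
lemma count_eq_ncard {x : Cant} (hx : (ksupp x).Finite) {N : ℕ}
    (hall : ∀ i ∈ ksupp x, i < N) :
    Nat.count (· ∈ ksupp x) N = (ksupp x).ncard := by
  rw [Nat.count_eq_card_filter_range, Set.ncard_eq_toFinset_card (ksupp x) hx]
  congr 1
  ext i
  simp only [Finset.mem_filter, Finset.mem_range, Set.Finite.mem_toFinset]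
  exact ⟨fun h => h.2, fun h => ⟨hall i h, h⟩⟩

lemma kf_fin {x : Cant} (hx : (ksupp x).Finite) :
    kf x = ∑ j ∈ Finset.range (ksupp x).ncard, kterm x j := by
  rw [kf_split x (ksupp x).ncard]
  have : ∀ j : ℕ, kterm x (j + (ksupp x).ncard) = 0 := fun j =>
    kterm_eq_zero x hx (by omega)
  rw [tsum_congr this, tsum_zero, add_zero]

open scoped Classical in
lemma estA {x y : Cant} (hx : (ksupp x).Finite) {N : ℕ}
    (hall : ∀ i ∈ ksupp x, i < N)
    (h : ∀ i < N, (i ∈ ksupp x ↔ i ∈ ksupp y)) :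
    |kf y - kf x| ≤ (2⁻¹:ℝ) ^ (ksupp x).ncard := by
  have hc : Nat.count (· ∈ ksupp x) N = (ksupp x).ncard := count_eq_ncard hx hall
  have hterm : ∀ j ∈ Finset.range (ksupp x).ncard, kterm x j = kterm y j := fun j hj =>
    kterm_congr h (by rw [hc]; exact Finset.mem_range.1 hj)
  rw [kf_split y (ksupp x).ncard, kf_fin hx, ← Finset.sum_congr rfl hterm]
  simpa using abs_tail_le y (ksupp x).ncard

open scoped Classical in
lemma estB {x y : Cant} {N m : ℕ}
    (h : ∀ i < N, (i ∈ ksupp x ↔ i ∈ ksupp y))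
    (hm : m ≤ Nat.count (· ∈ ksupp x) N) :
    |kf y - kf x| ≤ (2⁻¹:ℝ) ^ m + (2⁻¹:ℝ) ^ m := by
  have hterm : ∀ j ∈ Finset.range m, kterm x j = kterm y j := fun j hj =>
    kterm_congr h (lt_of_lt_of_le (Finset.mem_range.1 hj) hm)
  rw [kf_split y m, kf_split x m, ← Finset.sum_congr rfl hterm]
  have : ∀ a b c : ℝ, (a + b) - (a + c) = b - c := fun a b c => by ring
  rw [this]
  exact (abs_sub _ _).trans (add_le_add (abs_tail_le y m) (abs_tail_le x m))

lemma ksupp_update (x : Cant) (m : ℕ) (hm : 0 < m) :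
    ksupp (Function.update x ⟨m, hm⟩ true) = insert m (ksupp x) := by
  ext i
  simp only [ksupp, Set.mem_setOf_eq, Set.mem_insert_iff]
  constructor
  · rintro ⟨hi, hup⟩
    by_cases him : i = m
    · exact Or.inl him
    · right
      refine ⟨hi, ?_⟩
      exact (Function.update_of_ne (show (⟨i, hi⟩ : ℕ+) ≠ ⟨m, hm⟩ from fun hc => him (congrArg Subtype.val hc)) _ _).symm.trans hup
  · rintro (him | ⟨hi, hxi⟩)
    · subst him
      exact ⟨hm, Function.update_self _ _ _⟩
    · by_cases him : i = m
      · subst him; exact ⟨hm, Function.update_self _ _ _⟩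
      · exact ⟨hi, by
          exact (Function.update_of_ne (show (⟨i, hi⟩ : ℕ+) ≠ ⟨m, hm⟩ from fun hc => him (congrArg Subtype.val hc)) _ _).trans hxi⟩

open scoped Classical in
lemma kf_insert {x : Cant} (hx : (ksupp x).Finite) {m : ℕ} (hm : 0 < m)
    (hall : ∀ i ∈ ksupp x, i < m) :
    kf (Function.update x ⟨m, hm⟩ true)
      = kf x + (-1:ℝ) ^ m * (2⁻¹:ℝ) ^ ((ksupp x).ncard + 1) := by
  set y := Function.update x ⟨m, hm⟩ true with hy
  set k := (ksupp x).ncard with hk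
  have hky : ksupp y = insert m (ksupp x) := ksupp_update x m hm
  have hmnot : m ∉ ksupp x := fun hmem => lt_irrefl m (hall m hmem)
  have hyfin : (ksupp y).Finite := by rw [hky]; exact hx.insert m
  have hycard : (ksupp y).ncard = k + 1 := by
    rw [hky, Set.ncard_insert_of_notMem hmnot hx]
  have hagree : ∀ i < m, (i ∈ ksupp x ↔ i ∈ ksupp y) := by
    intro i hi
    rw [hky, Set.mem_insert_iff]
    exact ⟨Or.inr, fun h => h.elim (fun he => absurd he (Nat.ne_of_lt hi)) id⟩
  have hcx : Nat.count (· ∈ ksupp x) m = k := count_eq_ncard hx hall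
  have hcy : Nat.count (· ∈ ksupp y) m = k := by
    rw [← count_congr' hagree le_rfl, hcx]
  have hnth : Nat.nth (· ∈ ksupp y) k = m := by
    conv_lhs => rw [← hcy]
    exact Nat.nth_count (by rw [hky]; exact Set.mem_insert m _)
  have hlast : kterm y k = (-1:ℝ) ^ m * (2⁻¹:ℝ) ^ (k + 1) := by
    unfold kterm
    rw [if_pos (Or.inr (by rw [hycard]; omega)), hnth]
    congr 1
    rw [show (-(k+1:ℤ)) = (-((k+1:ℕ):ℤ)) by push_cast; ring, two_zpow_neg]
  rw [kf_fin hyfin, hycard, Finset.sum_range_succ, hlast, kf_fin hx, ← hk]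
  congr 1
  refine Finset.sum_congr rfl fun j hj => ?_
  exact (kterm_congr hagree (by rw [hcx]; exact Finset.mem_range.1 hj)).symm

lemma reach : ∀ r : ℕ, ∀ x : Cant, (ksupp x).Finite → ∀ M : ℕ, 0 < M →
    (∀ i ∈ ksupp x, i < M) → ∀ s : ℝ, |s| ≤ (2⁻¹:ℝ) ^ (ksupp x).ncard →
    ∃ y : Cant, (∀ i : ℕ+, (i:ℕ) < M → y i = x i) ∧
      |kf y - (kf x + s)| ≤ (2⁻¹:ℝ) ^ ((ksupp x).ncard + r) := by
  intro r
  induction r with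
  | zero =>
    intro x hx M hM hall s hs
    refine ⟨x, fun i _ => rfl, ?_⟩
    rw [show kf x - (kf x + s) = -s by ring, abs_neg]
    simpa using hs
  | succ r ih =>
    intro x hx M hM hall s hs
    set k := (ksupp x).ncard with hk
    set m : ℕ := if 0 ≤ s then 2*M else 2*M+1 with hmdef
    have hm : 0 < m := by rw [hmdef]; split <;> omega
    have hMm : M ≤ m := by rw [hmdef]; split <;> omega
    set e : ℝ := if 0 ≤ s then 1 else -1 with hedef
    have hpow : (-1:ℝ) ^ m = e := by
      rw [hmdef, hedef]
      split
      · rw [pow_mul]; norm_num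
      · rw [pow_succ, pow_mul]; norm_num
    have hallm : ∀ i ∈ ksupp x, i < m := fun i hi => lt_of_lt_of_le (hall i hi) hMm
    set x' := Function.update x ⟨m, hm⟩ true with hx'def
    have hkx' : ksupp x' = insert m (ksupp x) := ksupp_update x m hm
    have hmnot : m ∉ ksupp x := fun hmem => lt_irrefl m (hallm m hmem)
    have hx'fin : (ksupp x').Finite := by rw [hkx']; exact hx.insert m
    have hx'card : (ksupp x').ncard = k + 1 := by
      rw [hkx', Set.ncard_insert_of_notMem hmnot hx]
    have hkfx' : kf x' = kf x + e * (2⁻¹:ℝ) ^ (k+1) := by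
      rw [hx'def, kf_insert hx hm hallm, hpow]
    set c : ℝ := (2⁻¹:ℝ) ^ (k+1) with hcdef
    have hcpos : 0 < c := by positivity
    have h2c : (2⁻¹:ℝ) ^ k = 2 * c := by rw [hcdef, pow_succ]; ring
    set s' : ℝ := s - e * c with hs'def
    have hs' : |s'| ≤ c := by
      rw [abs_le] at hs ⊢
      rw [hs'def, hedef]
      by_cases h0 : 0 ≤ s
      · rw [if_pos h0]
        constructor <;> nlinarith [hs.1, hs.2]
      · rw [if_neg h0]
        push_neg at h0
        constructor <;> nlinarith [hs.1, hs.2]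
    have hall' : ∀ i ∈ ksupp x', i < m + 1 := by
      intro i hi
      rw [hkx', Set.mem_insert_iff] at hi
      rcases hi with h | h
      · omega
      · have := hallm i h; omega
    obtain ⟨y, hyagree, hybound⟩ := ih x' hx'fin (m+1) (by omega) hall' s'
      (by rw [hx'card]; exact hs')
    refine ⟨y, ?_, ?_⟩
    · intro i hi
      rw [hyagree i (by omega)]
      exact Function.update_of_ne
        (fun hc => by
          have : (i:ℕ) = m := congrArg Subtype.val hc
          omega) _ _
    · have heq : kf x' + s' = kf x + s := by rw [hkfx', hs'def]; ring
      rw [heq] at hybound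
      rw [hx'card] at hybound
      calc |kf y - (kf x + s)| ≤ (2⁻¹:ℝ) ^ (k + 1 + r) := hybound
        _ = (2⁻¹:ℝ) ^ (k + (r+1)) := by ring_nf

lemma cylinder_mem_nhds (x : Cant) (N : ℕ) :
    {y : Cant | ∀ i : ℕ+, (i:ℕ) < N → y i = x i} ∈ 𝓝 x := by
  have hI : ({i : ℕ+ | (i:ℕ) < N}).Finite := by
    have : {i : ℕ+ | (i:ℕ) < N} = (fun i : ℕ+ => (i:ℕ)) ⁻¹' (Set.Iio N) := rfl
    rw [this]
    exact Set.Finite.preimage (Set.injOn_of_injective PNat.coe_injective)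
      (Set.finite_Iio N)
  have : ({i : ℕ+ | (i:ℕ) < N}).pi (fun i => {x i}) ∈ 𝓝 x :=
    set_pi_mem_nhds hI (fun i _ =>
      (isOpen_discrete _).mem_nhds (Set.mem_singleton _))
  refine Filter.mem_of_superset this ?_
  intro y hy i hi
  exact hy i hi

lemma agree_of_coord {x y : Cant} {N : ℕ}
    (h : ∀ i : ℕ+, (i:ℕ) < N → y i = x i) :
    ∀ i < N, (i ∈ ksupp x ↔ i ∈ ksupp y) := by
  intro i hi
  simp only [ksupp, Set.mem_setOf_eq]
  constructor
  · rintro ⟨h0, hx⟩; exact ⟨h0, by rw [h ⟨i, h0⟩ hi]; exact hx⟩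
  · rintro ⟨h0, hyv⟩; exact ⟨h0, by rw [← h ⟨i, h0⟩ hi]; exact hyv⟩

open scoped Classical in
lemma closure_subset_rhs :
    closure {p : Cant × ℝ | p.2 = kf p.1} ⊆
      {p : Cant × ℝ | p.2 = kf p.1} ∪
        ⋃ x ∈ {x : Cant | (ksupp x).Finite},
          {x} ×ˢ Icc (kf x - (2 : ℝ) ^ (-((ksupp x).ncard : ℤ)))
            (kf x + (2 : ℝ) ^ (-((ksupp x).ncard : ℤ))) := by
  rintro ⟨x, t⟩ hp
  have key : ∀ N : ℕ, ∀ ε > (0:ℝ), ∃ y : Cant,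
      (∀ i < N, (i ∈ ksupp x ↔ i ∈ ksupp y)) ∧ |kf y - t| < ε := by
    intro N ε hε
    have hU : ({y : Cant | ∀ i : ℕ+, (i:ℕ) < N → y i = x i} ×ˢ Metric.ball t ε)
        ∈ 𝓝 (x, t) := prod_mem_nhds (cylinder_mem_nhds x N) (Metric.ball_mem_nhds t hε)
    obtain ⟨⟨y, u⟩, ⟨hy1, hy2⟩, hyG⟩ := mem_closure_iff_nhds.1 hp _ hU
    refine ⟨y, agree_of_coord hy1, ?_⟩
    have : u = kf y := hyG
    rw [← this]
    simpa [Real.dist_eq] using hy2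
  by_cases hfin : (ksupp x).Finite
  · -- x has finite support : t ∈ I_x
    right
    obtain ⟨B, hB⟩ := hfin.bddAbove
    set k := (ksupp x).ncard with hk
    have hbound : |t - kf x| ≤ (2⁻¹:ℝ) ^ k := by
      refine le_of_forall_pos_le_add ?_
      intro ε hε
      obtain ⟨y, hagree, hclose⟩ := key (B+1) ε hε
      have hall : ∀ i ∈ ksupp x, i < B + 1 := fun i hi =>
        Nat.lt_succ_of_le (hB hi)
      have h1 : |kf y - kf x| ≤ (2⁻¹:ℝ) ^ k := estA hfin hall hagree
      calc |t - kf x| ≤ |t - kf y| + |kf y - kf x| := abs_sub_le _ _ _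
        _ ≤ ε + (2⁻¹:ℝ) ^ k := add_le_add (abs_sub_comm t (kf y) ▸ hclose.le) h1
        _ = (2⁻¹:ℝ) ^ k + ε := by ring
    rw [Set.mem_iUnion₂]
    refine ⟨x, hfin, ?_⟩
    rw [Set.mem_prod, Set.mem_singleton_iff]
    refine ⟨rfl, ?_⟩
    rw [two_zpow_neg, ← hk]
    rw [abs_le] at hbound
    exact ⟨by linarith [hbound.1], by linarith [hbound.2]⟩
  · -- x has infinite support : t = kf x
    left
    have hinf : (ksupp x).Infinite := hfin
    have hbound : ∀ δ > (0:ℝ), |t - kf x| ≤ δ := by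
      intro δ hδ
      obtain ⟨m, hm⟩ := exists_pow_lt_of_lt_one (show (0:ℝ) < δ/3 by linarith)
        (show (2⁻¹:ℝ) < 1 by norm_num)
      set p : ℕ → Prop := (· ∈ ksupp x) with hp'
      set N := Nat.nth p m + 1 with hN
      have e1 : Nat.count p (Nat.nth p m) = m :=
        Nat.count_nth_of_infinite (p := p) hinf m
      have e2 : p (Nat.nth p m) := Nat.nth_mem_of_infinite (p := p) hinf m
      have hcount : m < Nat.count p N := by
        rw [hN, Nat.count_succ, e1, if_pos e2]
        omega
      obtain ⟨y, hagree, hclose⟩ := key N (δ/3) (by linarith)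
      have h1 : |kf y - kf x| ≤ (2⁻¹:ℝ) ^ m + (2⁻¹:ℝ) ^ m :=
        estB hagree (le_of_lt hcount)
      calc |t - kf x| ≤ |t - kf y| + |kf y - kf x| := abs_sub_le _ _ _
        _ ≤ δ/3 + ((2⁻¹:ℝ) ^ m + (2⁻¹:ℝ) ^ m) :=
          add_le_add (le_of_lt (by rwa [abs_sub_comm])) h1
        _ ≤ δ := by linarith
    have : |t - kf x| ≤ 0 := le_of_forall_pos_le_add (by
      intro ε hε; simpa using hbound ε hε)
    have h0 : t - kf x = 0 := abs_nonpos_iff.1 this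
    show t = kf x
    linarith

lemma rhs_subset_closure :
    ({p : Cant × ℝ | p.2 = kf p.1} ∪
        ⋃ x ∈ {x : Cant | (ksupp x).Finite},
          {x} ×ˢ Icc (kf x - (2 : ℝ) ^ (-((ksupp x).ncard : ℤ)))
            (kf x + (2 : ℝ) ^ (-((ksupp x).ncard : ℤ)))) ⊆
      closure {p : Cant × ℝ | p.2 = kf p.1} := by
  rintro p (hG | hI)
  · exact subset_closure hG
  · rw [Set.mem_iUnion₂] at hI
    obtain ⟨x, hfin, hmem⟩ := hI
    obtain ⟨x', t⟩ := p
    rw [Set.mem_prod, Set.mem_singleton_iff] at hmem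
    obtain ⟨rfl, ht⟩ := hmem
    set k := (ksupp x').ncard with hk
    set s : ℝ := t - kf x' with hsdef
    have hs : |s| ≤ (2⁻¹:ℝ) ^ k := by
      rw [abs_le, hsdef]
      simp only [Set.mem_Icc, two_zpow_neg] at ht
      constructor <;> [linarith [ht.1]; linarith [ht.2]]
    obtain ⟨B, hB⟩ := hfin.bddAbove
    have hally : ∀ r : ℕ, ∃ y : Cant,
        (∀ i : ℕ+, (i:ℕ) < max (B+1) (r+1) → y i = x' i) ∧
        |kf y - (kf x' + s)| ≤ (2⁻¹:ℝ) ^ (k + r) := fun r =>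
      reach r x' hfin (max (B+1) (r+1)) (by omega)
        (fun i hi => lt_of_lt_of_le (Nat.lt_succ_of_le (hB hi)) (le_max_left _ _))
        s hs
    choose y hyagree hybound using hally
    have hts : kf x' + s = t := by ring
    rw [hts] at hybound
    have htend1 : Filter.Tendsto y Filter.atTop (𝓝 x') := by
      rw [tendsto_pi_nhds]
      intro i
      refine Filter.Tendsto.congr' ?_ tendsto_const_nhds
      rw [Filter.EventuallyEq, Filter.eventually_atTop]
      exact ⟨(i:ℕ), fun r hr => (hyagree r i (by
        have := i.2
        calc (i:ℕ) < r + 1 := by omega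
          _ ≤ max (B+1) (r+1) := le_max_right _ _)).symm⟩
    have htend2 : Filter.Tendsto (fun r => kf (y r)) Filter.atTop (𝓝 t) := by
      have h0 : Filter.Tendsto (fun r => kf (y r) - t) Filter.atTop (𝓝 0) := by
        have hgt : Filter.Tendsto (fun r : ℕ => (2⁻¹:ℝ) ^ (k + r)) Filter.atTop (𝓝 0) := by
          have h1 : Filter.Tendsto (fun r : ℕ => (2⁻¹:ℝ) ^ r) Filter.atTop (𝓝 0) :=
            tendsto_pow_atTop_nhds_zero_of_lt_one (by norm_num) (by norm_num)
          have h2 := h1.const_mul ((2⁻¹:ℝ) ^ k)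
          rw [mul_zero] at h2
          refine h2.congr fun r => ?_
          rw [← pow_add]
        exact squeeze_zero_norm
          (fun r => by simpa [Real.norm_eq_abs] using hybound r) hgt
      have := h0.add_const t
      simpa using this
    exact mem_closure_of_tendsto (htend1.prodMk_nhds htend2)
      (Filter.Eventually.of_forall fun r => rfl)

/-- The closure of the graph `G` of Kuratowski's function is
`G ∪ ⋃_{x ∈ D} ({x} × I_x)`, where `I_x = [f(x) − 2^{−k_x}, f(x) + 2^{−k_x}]`.
(All the sets involved lie in `C × [−1,1]`, so the closure may equivalently be
taken there or in `C × ℝ`.) -/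
theorem closure_graph_kf :
    closure {p : Cant × ℝ | p.2 = kf p.1} =
      {p : Cant × ℝ | p.2 = kf p.1} ∪
        ⋃ x ∈ {x : Cant | (ksupp x).Finite},
          {x} ×ˢ Icc (kf x - (2 : ℝ) ^ (-((ksupp x).ncard : ℤ)))
            (kf x + (2 : ℝ) ^ (-((ksupp x).ncard : ℤ))) :=
  subset_antisymm closure_subset_rhs rhs_subset_closure
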